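/- In the BSR reduction analysis, let a feasible solution materialize m_ALG set versions (no element versions materialized, each element retrieved via an edge from a set version covering it), and let H be the set of non-materialized 'hopped' set versions a_i through which some element b_j is retrieved. Then |H| ≤ m_ALG - m_OPT, and hence the family S = {A_i : a_i materialized} ∪ H is a set cover of size at most 2·m_ALG - m_OPT. -/

import Mathlib

/-- Edges of the set-cover reduction graph: set versions `a_i` (left), element
versions `b_j` (right); symmetric unit-cost deltas between distinct set versions,
and between `a_i` and `b_j` whenever element `o_j ∈ A_i` (i.e. `mem i j`). -/
def covEdge {m n : ℕ} (mem : Fin m → Fin n → Prop) :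
    Sum (Fin m) (Fin n) → Sum (Fin m) (Fin n) → Prop
  | Sum.inl i, Sum.inl i' => i ≠ i'
  | Sum.inl i, Sum.inr j => mem i j
  | Sum.inr j, Sum.inl i => mem i j
  | Sum.inr _, Sum.inr _ => False

/-- BSR reduction analysis: a feasible solution under total retrieval constraint
`R = m - m_OPT + n` materializes only set versions (`M = {a_i : i ∈ Msets}`,
`m_ALG = |Msets|`) and retrieves each element via an edge from a set version
covering it.  Let `H` be the set of non-materialized "hopped" set versions `a_i`
through which some element is retrieved.  Then `|H| ≤ m_ALG - m_OPT`, and the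
family `S = {A_i : a_i materialized} ∪ H` is a set cover of size at most
`2·m_ALG - m_OPT`. -/
theorem bsr_hopped_sets_bound (m n : ℕ) (mem : Fin m → Fin n → Prop)
    (mOPT mALG : ℕ)
    (hmOPT : mOPT =
      sInf {k | ∃ C : Finset (Fin m), C.card = k ∧ ∀ j : Fin n, ∃ i ∈ C, mem i j})
    (Msets : Finset (Fin m)) (hmALG : mALG = Msets.card)
    (par : Sum (Fin m) (Fin n) → Sum (Fin m) (Fin n))
    (Rv : Sum (Fin m) (Fin n) → ℕ)
    (h0 : ∀ v ∈ Msets.image Sum.inl, Rv v = 0)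
    (hstep : ∀ v ∉ Msets.image Sum.inl, covEdge mem (par v) v ∧ Rv v = Rv (par v) + 1)
    (hpar : ∀ j : Fin n, ∃ i : Fin m, par (Sum.inr j) = Sum.inl i ∧ mem i j)
    (hfeas : ∑ v, Rv v ≤ m - mOPT + n) :
    let H : Finset (Fin m) := Finset.univ.filter
      (fun i : Fin m => i ∉ Msets ∧ ∃ j : Fin n, par (Sum.inr j) = Sum.inl i)
    H.card ≤ mALG - mOPT ∧
    (∀ j : Fin n, ∃ i ∈ Msets ∪ H, mem i j) ∧
    (Msets ∪ H).card ≤ 2 * mALG - mOPT := by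

  classical
  intro H
  -- B: elements retrieved through a non-materialized set version
  set B : Finset (Fin n) := Finset.univ.filter
    (fun j => ∃ i : Fin m, par (Sum.inr j) = Sum.inl i ∧ i ∉ Msets) with hBdef
  have hinr_not : ∀ j : Fin n, (Sum.inr j : Sum (Fin m) (Fin n)) ∉ Msets.image Sum.inl := by
    intro j hj
    obtain ⟨i, -, h⟩ := Finset.mem_image.mp hj
    cases h
  have hRleft : ∀ i : Fin m, i ∉ Msets → 1 ≤ Rv (Sum.inl i) := by
    intro i hi
    have hni : (Sum.inl i : Sum (Fin m) (Fin n)) ∉ Msets.image Sum.inl := by simp [hi]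
    have := (hstep _ hni).2
    omega
  have hRinr : ∀ j : Fin n, 1 ≤ Rv (Sum.inr j) := by
    intro j
    have := (hstep _ (hinr_not j)).2
    omega
  have hRB : ∀ j ∈ B, 2 ≤ Rv (Sum.inr j) := by
    intro j hj
    rw [hBdef, Finset.mem_filter] at hj
    obtain ⟨-, i, hpi, hiM⟩ := hj
    have h2 := (hstep _ (hinr_not j)).2
    rw [hpi] at h2
    have := hRleft i hiM
    omega
  -- lower bound on the left sum
  have h1 : m - Msets.card ≤ ∑ i : Fin m, Rv (Sum.inl i) := by
    calc m - Msets.card = (Finset.univ \ Msets).card := by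
          rw [Finset.card_sdiff_of_subset (Finset.subset_univ _), Finset.card_univ, Fintype.card_fin]
      _ = ∑ i ∈ Finset.univ \ Msets, 1 := by simp
      _ ≤ ∑ i ∈ Finset.univ \ Msets, Rv (Sum.inl i) := by
          apply Finset.sum_le_sum
          intro i hi
          exact hRleft i (Finset.mem_sdiff.mp hi).2
      _ ≤ ∑ i : Fin m, Rv (Sum.inl i) := Finset.sum_le_sum_of_subset (Finset.subset_univ _)
  -- lower bound on the right sum
  have h2 : n + B.card ≤ ∑ j : Fin n, Rv (Sum.inr j) := by
    have hsplit : ∑ j ∈ B, Rv (Sum.inr j) + ∑ j ∈ Finset.univ \ B, Rv (Sum.inr j)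
        = ∑ j : Fin n, Rv (Sum.inr j) := by
      rw [add_comm]
      exact Finset.sum_sdiff (Finset.subset_univ _)
    have hb : 2 * B.card ≤ ∑ j ∈ B, Rv (Sum.inr j) := by
      calc 2 * B.card = ∑ j ∈ B, 2 := by simp [mul_comm]
        _ ≤ _ := Finset.sum_le_sum hRB
    have hnb : n - B.card ≤ ∑ j ∈ Finset.univ \ B, Rv (Sum.inr j) := by
      calc n - B.card = (Finset.univ \ B).card := by
            rw [Finset.card_sdiff_of_subset (Finset.subset_univ _), Finset.card_univ, Fintype.card_fin]
        _ = ∑ j ∈ Finset.univ \ B, 1 := by simp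
        _ ≤ _ := Finset.sum_le_sum (fun j _ => hRinr j)
    have hBn : B.card ≤ n := by
      simpa using Finset.card_le_card (Finset.subset_univ B)
    omega
  have hsum : (m - Msets.card) + (n + B.card) ≤ m - mOPT + n := by
    calc (m - Msets.card) + (n + B.card)
        ≤ ∑ i : Fin m, Rv (Sum.inl i) + ∑ j : Fin n, Rv (Sum.inr j) := by
          exact Nat.add_le_add h1 h2
      _ = ∑ v, Rv v := (Fintype.sum_sum_type Rv).symm
      _ ≤ m - mOPT + n := hfeas
  have hMm : Msets.card ≤ m := by
    simpa using Finset.card_le_card (Finset.subset_univ Msets)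
  have hBbound : B.card ≤ mALG - mOPT := by omega
  -- |H| ≤ |B| via the image of the parent map
  have hHB : H.card ≤ B.card := by
    have g : ∀ j : Fin n, {i : Fin m // par (Sum.inr j) = Sum.inl i ∧ mem i j} := by
      intro j
      exact ⟨(hpar j).choose, (hpar j).choose_spec⟩
    have hsub : H ⊆ B.image (fun j => (g j).1) := by
      intro i hi
      rw [Finset.mem_filter] at hi
      obtain ⟨-, hiM, j, hj⟩ := hi
      have hgj : (g j).1 = i :=
        Sum.inl_injective ((g j).2.1.symm.trans hj)
      refine Finset.mem_image.mpr ⟨j, ?_, hgj⟩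
      rw [hBdef, Finset.mem_filter]
      exact ⟨Finset.mem_univ _, i, hj, hiM⟩
    calc H.card ≤ (B.image (fun j => (g j).1)).card := Finset.card_le_card hsub
      _ ≤ B.card := Finset.card_image_le
  have hHbound : H.card ≤ mALG - mOPT := le_trans hHB hBbound
  -- cover
  have hcover : ∀ j : Fin n, ∃ i ∈ Msets ∪ H, mem i j := by
    intro j
    obtain ⟨i, hpi, hmem⟩ := hpar j
    by_cases hiM : i ∈ Msets
    · exact ⟨i, Finset.mem_union_left _ hiM, hmem⟩
    · refine ⟨i, Finset.mem_union_right _ ?_, hmem⟩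
      exact Finset.mem_filter.mpr ⟨Finset.mem_univ _, hiM, j, hpi⟩
  have hOPTle : mOPT ≤ (Msets ∪ H).card := by
    rw [hmOPT]
    exact Nat.sInf_le ⟨Msets ∪ H, rfl, hcover⟩
  have hcard : (Msets ∪ H).card ≤ Msets.card + H.card := Finset.card_union_le _ _
  exact ⟨hHbound, hcover, by omega⟩
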